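/- Fix a real v ≥ 4 and set δ = 2/√v. For a ∈ {0,1} let ψ_a = √δ·(e_a ⊗ e_a) + √(1−δ)·(e_2 ⊗ e_2) ∈ ℂ⁹ (indexed by Fin 3 × Fin 3). Let d ≥ 1 and suppose ρ_init, ρ_0, ρ_1 are positive semidefinite complex matrices indexed by (Fin d × Fin 3 × Fin 3) and ρ_{00}, ρ_{01}, ρ_{10}, ρ_{11} are positive semidefinite complex matrices indexed by (Fin 3 × Fin 3), satisfying: (i) tr(ρ_init) = 1; (ii) for each b ∈ {0,1} and all β, β' ∈ Fin 3, Σ_{x ∈ Fin d, α ∈ Fin 3} ρ_init((x,α,β),(x,α,β')) = Σ_{x ∈ Fin d, α ∈ Fin 3} ρ_b((x,α,β),(x,α,β')); (iii) for each b ∈ {0,1} and all (α,β),(α',β') ∈ Fin 3 × Fin 3, Σ_{x ∈ Fin d} ρ_b((x,α,β),(x,α',β')) = ρ_{b0}((α,β),(α',β')) + ρ_{b1}((α,β),(α',β')). Then (1/2)·Σ_{a,b ∈ {0,1}} (v + [a=b])·Re⟨ψ_a, ρ_{ba} ψ_a⟩ − v ≤ 1/2 + 1/(8√v), where [a=b]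 equals 1 if a = b and 0 otherwise. (This is the statement that a dishonest Alice's expected win in the two-party coin-flipping protocol with penalty v is at most 1/2 + 1/(8√v).) -/

import Mathlib

open Matrix
open scoped ComplexOrder

/-- The protocol state `ψ_a = √δ·e_a⊗e_a + √(1-δ)·e_2⊗e_2 ∈ ℂ³ ⊗ ℂ³` for `a ∈ {0,1}`. -/
noncomputable def psiPen (δ : ℝ) (a : Fin 2) : Fin 3 × Fin 3 → ℂ := fun p =>
  if p.1 = Fin.castLE (by norm_num) a ∧ p.2 = Fin.castLE (by norm_num) a then
    (Real.sqrt δ : ℂ)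
  else if p.1 = 2 ∧ p.2 = 2 then (Real.sqrt (1 - δ) : ℂ) else 0

lemma psi0_eq (δ : ℝ) : psiPen δ 0 =
    Pi.single ((0:Fin 3),(0:Fin 3)) ((Real.sqrt δ : ℂ))
      + Pi.single ((2:Fin 3),(2:Fin 3)) ((Real.sqrt (1-δ) : ℂ)) := by
  funext p
  rcases p with ⟨p1, p2⟩
  fin_cases p1 <;> fin_cases p2 <;>
    norm_num [psiPen, Pi.single_apply, Prod.ext_iff, Fin.ext_iff, Fin.coe_castLE]

lemma psi1_eq (δ : ℝ) : psiPen δ 1 =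
    Pi.single ((1:Fin 3),(1:Fin 3)) ((Real.sqrt δ : ℂ))
      + Pi.single ((2:Fin 3),(2:Fin 3)) ((Real.sqrt (1-δ) : ℂ)) := by
  funext p
  rcases p with ⟨p1, p2⟩
  fin_cases p1 <;> fin_cases p2 <;>
    norm_num [psiPen, Pi.single_apply, Prod.ext_iff, Fin.ext_iff, Fin.coe_castLE]

lemma corePQ (w P Q : ℝ) (hw : 2 < w)
    (hG : w*(P^2+Q^2) - (P+Q)^2 ≤ 2*(w-2)) :
    (w^2+1)*P^2 + w^2*Q^2 ≤ 2*w^2 + 1 + 1/(4*w) := by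
  have hw0 : (0:ℝ) < w := by linarith
  have hA1 : (0:ℝ) < 8*w^3 - 4*w^2 + 13*w - 1 := by nlinarith
  have hlam : (0:ℝ) < 8*w^3 + 4*w + 1 := by positivity
  have hrw : 2*w^2 + 1 + 1/(4*w) = (8*w^3+4*w+1)/(4*w) := by field_simp; ring
  rw [hrw, le_div_iff₀ (by positivity)]
  have key : (8*w^3+4*w+1 - ((w^2+1)*P^2+w^2*Q^2)*(4*w)) * (2*(w-2)*(8*w^3-4*w^2+13*w-1))
      = (8*w^3-4*w^2+13*w-1)*(8*w^3+4*w+1)*(2*(w-2) - (w*(P^2+Q^2)-(P+Q)^2))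
        + ((8*w^3-4*w^2+13*w-1)*P - (8*w^3+4*w+1)*Q)^2
        + w*(w-2)*(32*w+9)*Q^2 := by ring
  have hpos : 0 ≤ (8*w^3+4*w+1 - ((w^2+1)*P^2+w^2*Q^2)*(4*w)) * (2*(w-2)*(8*w^3-4*w^2+13*w-1)) := by
    rw [key]
    have h1 : 0 ≤ (8*w^3-4*w^2+13*w-1)*(8*w^3+4*w+1)*(2*(w-2) - (w*(P^2+Q^2)-(P+Q)^2)) :=
      mul_nonneg (mul_nonneg hA1.le hlam.le) (by linarith)
    have h2 : 0 ≤ w*(w-2)*(32*w+9)*Q^2 := by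
      have : (0:ℝ) ≤ w - 2 := by linarith
      positivity
    have h3 : 0 ≤ ((8*w^3-4*w^2+13*w-1)*P - (8*w^3+4*w+1)*Q)^2 := sq_nonneg _
    linarith
  have hfac : (0:ℝ) < 2*(w-2)*(8*w^3-4*w^2+13*w-1) := by
    have : (0:ℝ) < w - 2 := by linarith
    positivity
  have := (mul_nonneg_iff_of_pos_right hfac).mp hpos
  linarith

lemma coreUACm (w U A C m : ℝ) (hw : 2 ≤ w) (hU : 0 ≤ U) (hA : 0 ≤ A) (hC : 0 ≤ C)
    (hm0 : 0 ≤ m) (h1 : w*U^2 ≤ 2*(1-m)) (h2 : w*(A^2+C^2) ≤ 2*(w-2)*m) :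
    (w^2+1)*(U+A)^2 + w^2*(U+C)^2 ≤ 2*w^2 + 1 + 1/(4*w) := by
  rcases eq_or_lt_of_le hw with hw2 | hw2
  · have hA0 : A = 0 := by nlinarith
    have hC0 : C = 0 := by nlinarith
    subst hA0 hC0
    rw [← hw2]
    norm_num
    nlinarith
  · have hG : w*((U+A)^2+(U+C)^2) - ((U+A)+(U+C))^2 ≤ 2*(w-2) := by
      nlinarith [sq_nonneg ((w-2)*U - (A+C)), mul_le_mul_of_nonneg_left h1 (by linarith : (0:ℝ) ≤ w-2)]
    exact corePQ w (U+A) (U+C) hw2 hG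

section MatrixHelpers
variable {ι : Type*} [Fintype ι] [DecidableEq ι]

lemma qform_re_nonneg {M : Matrix ι ι ℂ} (hM : M.PosSemidef) (x : ι → ℂ) :
    0 ≤ (star x ⬝ᵥ M *ᵥ x).re := by
  have h := hM.dotProduct_mulVec_nonneg x
  rw [Complex.le_def] at h
  simpa using h.1

lemma quad_eval (M : Matrix ι ι ℂ) (i j : ι) (hij : i ≠ j) (c d : ℂ) :
    star (Pi.single i c + Pi.single j d) ⬝ᵥ M *ᵥ (Pi.single i c + Pi.single j d)
      = star c * M i i * c + star c * M i j * d + star d * M j i * c + star d * M j j * d := by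
  simp only [star_add, ← Pi.single_star, add_dotProduct, mulVec_add, dotProduct_add,
    mulVec_single, single_dotProduct]
  simp [Pi.single_apply, hij, (Ne.symm hij : j ≠ i)]
  ring

lemma diag_re_nonneg {M : Matrix ι ι ℂ} (hM : M.PosSemidef) (i : ι) :
    0 ≤ (M i i).re := by
  have h := qform_re_nonneg hM (Pi.single i 1)
  have he : star (Pi.single i (1:ℂ)) ⬝ᵥ M *ᵥ (Pi.single i (1:ℂ)) = M i i := by
    simp only [← Pi.single_star, mulVec_single, single_dotProduct]
    simp
  rwa [he] at h

lemma offdiag_re_le {M : Matrix ι ι ℂ} (hM : M.PosSemidef) (i j : ι) (hij : i ≠ j) :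
    (M i j).re ≤ Real.sqrt ((M i i).re * (M j j).re) := by
  have hquad : ∀ t : ℝ, 0 ≤ (M i i).re * (t * t) + (2 * (M i j).re) * t + (M j j).re := by
    intro t
    have h := qform_re_nonneg hM (Pi.single i (t:ℂ) + Pi.single j 1)
    rw [quad_eval M i j hij] at h
    have hji : M j i = star (M i j) := (hM.isHermitian.apply j i).symm
    rw [hji] at h
    simp only [Complex.add_re, Complex.mul_re, Complex.ofReal_re, Complex.ofReal_im,
      RCLike.star_def, Complex.conj_re, Complex.conj_im, Complex.one_re, Complex.one_im,
      Complex.mul_im] at h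
    nlinarith [h]
  have hd := discrim_le_zero hquad
  rw [discrim] at hd
  have h1 : ((M i j).re)^2 ≤ (M i i).re * (M j j).re := by nlinarith
  calc (M i j).re ≤ |(M i j).re| := le_abs_self _
    _ = Real.sqrt (((M i j).re)^2) := (Real.sqrt_sq_eq_abs _).symm
    _ ≤ Real.sqrt ((M i i).re * (M j j).re) := Real.sqrt_le_sqrt h1

lemma pterm_bound {M : Matrix ι ι ℂ} (hM : M.PosSemidef) (i j : ι) (hij : i ≠ j)
    (x y S T : ℝ) (hx : 0 ≤ x) (hy : 0 ≤ y) (hS : 0 ≤ S) (hT : 0 ≤ T)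
    (hS2 : S^2 = (M i i).re) (hT2 : T^2 = (M j j).re) :
    (star (Pi.single i (x:ℂ) + Pi.single j (y:ℂ)) ⬝ᵥ
      M *ᵥ (Pi.single i (x:ℂ) + Pi.single j (y:ℂ))).re ≤ (x*S + y*T)^2 := by
  rw [quad_eval M i j hij]
  have hji : M j i = star (M i j) := (hM.isHermitian.apply j i).symm
  rw [hji]
  have hc := offdiag_re_le hM i j hij
  have hsqrt : Real.sqrt ((M i i).re * (M j j).re) = S * T := by
    rw [← hS2, ← hT2, ← mul_pow, Real.sqrt_sq (mul_nonneg hS hT)]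
  rw [hsqrt] at hc
  simp only [Complex.add_re, Complex.mul_re, Complex.ofReal_re, Complex.ofReal_im,
    RCLike.star_def, Complex.conj_re, Complex.conj_im, Complex.mul_im]
  have e1 : x^2*(M i i).re = x^2*S^2 := by rw [hS2]
  have e2 : y^2*(M j j).re = y^2*T^2 := by rw [hT2]
  nlinarith [mul_nonneg hx hy, mul_le_mul_of_nonneg_left hc (mul_nonneg hx hy), e1, e2]

lemma cauchy_sq (x y g0 g1 T0 T1 h TT : ℝ) (hx : 0 ≤ x) (hy : 0 ≤ y) (hg0 : 0 ≤ g0)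
    (hg1 : 0 ≤ g1) (hT0 : 0 ≤ T0) (hT1 : 0 ≤ T1) (hh : 0 ≤ h) (hTT : 0 ≤ TT)
    (hh2 : h^2 = g0^2+g1^2) (hTT2 : TT^2 = T0^2+T1^2) :
    (x*g0+y*T0)^2 + (x*g1+y*T1)^2 ≤ (x*h+y*TT)^2 := by
  have hcross : g0*T0 + g1*T1 ≤ h*TT := by
    nlinarith [sq_nonneg (g0*T1 - g1*T0), mul_nonneg hh hTT,
      mul_nonneg (mul_nonneg hg0 hT0) (mul_nonneg hg1 hT1)]
  have e1 : x^2*h^2 = x^2*(g0^2+g1^2) := by rw [hh2]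
  have e2 : y^2*TT^2 = y^2*(T0^2+T1^2) := by rw [hTT2]
  nlinarith [mul_nonneg hx hy, hcross, mul_le_mul_of_nonneg_left hcross (mul_nonneg hx hy), e1, e2]

end MatrixHelpers

lemma sq_step (x y S g T : ℝ) (hx : 0 ≤ x) (hy : 0 ≤ y) (hS : 0 ≤ S) (hg : 0 ≤ g)
    (hT : 0 ≤ T) (hSg : S ≤ g) : (x*S + y*T)^2 ≤ (x*g + y*T)^2 := by
  have h1 : 0 ≤ x*S + y*T := by positivity
  have h2 : x*S + y*T ≤ x*g + y*T := by nlinarith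
  nlinarith

set_option maxHeartbeats 2000000 in
theorem stmt_0 (v : ℝ) (hv : 4 ≤ v) (d : ℕ) (hd : 1 ≤ d)
    (ρI : Matrix (Fin d × Fin 3 × Fin 3) (Fin d × Fin 3 × Fin 3) ℂ)
    (ρ : Fin 2 → Matrix (Fin d × Fin 3 × Fin 3) (Fin d × Fin 3 × Fin 3) ℂ)
    (σ : Fin 2 → Fin 2 → Matrix (Fin 3 × Fin 3) (Fin 3 × Fin 3) ℂ)
    (hρI : ρI.PosSemidef) (hρ : ∀ b, (ρ b).PosSemidef) (hσ : ∀ b a, (σ b a).PosSemidef)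
    (htr : ρI.trace = 1)
    (hBfix : ∀ b : Fin 2, ∀ β β' : Fin 3,
      ∑ x : Fin d, ∑ α : Fin 3, ρI (x, α, β) (x, α, β') =
      ∑ x : Fin d, ∑ α : Fin 3, ρ b (x, α, β) (x, α, β'))
    (hmeas : ∀ b : Fin 2, ∀ α β α' β' : Fin 3,
      ∑ x : Fin d, ρ b (x, α, β) (x, α', β') =
      σ b 0 (α, β) (α', β') + σ b 1 (α, β) (α', β')) :
    (1 / 2) * (∑ a : Fin 2, ∑ b : Fin 2,
      (v + if a = b then 1 else 0) *
        (star (psiPen (2 / Real.sqrt v) a) ⬝ᵥ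
          (σ b a).mulVec (psiPen (2 / Real.sqrt v) a)).re) - v ≤
    1 / 2 + 1 / (8 * Real.sqrt v) := by
  have hv0 : (0:ℝ) ≤ v := by linarith
  set w := Real.sqrt v with hw_def
  have hw0 : 0 ≤ w := Real.sqrt_nonneg v
  have hwsq : w^2 = v := Real.sq_sqrt hv0
  have hw2 : 2 ≤ w := by nlinarith
  have hwpos : (0:ℝ) < w := by linarith
  set δ := 2 / w with hδ_def
  have hδ0 : 0 ≤ δ := by positivity
  have hδ1 : δ ≤ 1 := by
    rw [hδ_def, div_le_one hwpos]; linarith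
  have hwδ : w * δ = 2 := by
    rw [hδ_def]; field_simp
  set x := Real.sqrt δ with hx_def
  set y := Real.sqrt (1-δ) with hy_def
  have hx0 : 0 ≤ x := Real.sqrt_nonneg _
  have hy0 : 0 ≤ y := Real.sqrt_nonneg _
  have hx2 : x^2 = δ := Real.sq_sqrt hδ0
  have hy2 : y^2 = 1-δ := Real.sq_sqrt (by linarith)
  -- marginal quantities
  set mm : Fin 3 → ℝ := fun β => (∑ xx : Fin d, ∑ α : Fin 3, ρI (xx,α,β) (xx,α,β)).re with hmm_def
  -- the B-marginal identity
  have hsum : ∀ (b : Fin 2) (β : Fin 3),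
      ∑ α : Fin 3, (σ b 0 (α,β) (α,β) + σ b 1 (α,β) (α,β))
        = ∑ xx : Fin d, ∑ α : Fin 3, ρI (xx,α,β) (xx,α,β) := by
    intro b β
    calc ∑ α : Fin 3, (σ b 0 (α,β) (α,β) + σ b 1 (α,β) (α,β))
        = ∑ α : Fin 3, ∑ xx : Fin d, ρ b (xx,α,β) (xx,α,β) :=
          Finset.sum_congr rfl (fun α _ => (hmeas b α β α β).symm)
      _ = ∑ xx : Fin d, ∑ α : Fin 3, ρ b (xx,α,β) (xx,α,β) := Finset.sum_comm
      _ = ∑ xx : Fin d, ∑ α : Fin 3, ρI (xx,α,β) (xx,α,β) := (hBfix b β β).symm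
  have hsumre : ∀ (b : Fin 2) (β : Fin 3),
      ∑ α : Fin 3, ((σ b 0 (α,β) (α,β)).re + (σ b 1 (α,β) (α,β)).re) = mm β := by
    intro b β
    have := congrArg Complex.re (hsum b β)
    rw [Complex.re_sum] at this
    simp only [Complex.add_re] at this
    exact this
  -- trace identity
  have htrace : mm 0 + mm 1 + mm 2 = 1 := by
    have h1 : ∑ β : Fin 3, (∑ xx : Fin d, ∑ α : Fin 3, ρI (xx,α,β) (xx,α,β)) = 1 := by
      rw [← htr]
      rw [Matrix.trace]
      simp only [Matrix.diag]
      rw [Fintype.sum_prod_type]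
      rw [Finset.sum_comm]
      refine Finset.sum_congr rfl (fun xx _ => ?_)
      rw [Fintype.sum_prod_type]
      exact Finset.sum_comm
    have := congrArg Complex.re h1
    rw [Complex.re_sum, Fin.sum_univ_three] at this
    simpa [hmm_def] using this
  have hmmnn : ∀ β, 0 ≤ mm β := by
    intro β
    rw [hmm_def]
    simp only [Complex.re_sum]
    refine Finset.sum_nonneg (fun xx _ => Finset.sum_nonneg (fun α _ => ?_))
    exact diag_re_nonneg hρI _
  -- entry abbreviations
  have hdiagσ : ∀ (b a : Fin 2) (p : Fin 3 × Fin 3), 0 ≤ (σ b a p p).re :=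
    fun b a p => diag_re_nonneg (hσ b a) p
  -- diagonal bounds from the marginals
  have hs00 : (σ 0 0 ((0:Fin 3),(0:Fin 3)) ((0:Fin 3),(0:Fin 3))).re ≤ mm 0 := by
    have h := hsumre 0 0
    rw [Fin.sum_univ_three] at h
    have h1 := hdiagσ 0 1 ((0:Fin 3),(0:Fin 3))
    have h2 := hdiagσ 0 0 ((1:Fin 3),(0:Fin 3)); have h3 := hdiagσ 0 1 ((1:Fin 3),(0:Fin 3))
    have h4 := hdiagσ 0 0 ((2:Fin 3),(0:Fin 3)); have h5 := hdiagσ 0 1 ((2:Fin 3),(0:Fin 3))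
    linarith
  have hs11 : (σ 1 1 ((1:Fin 3),(1:Fin 3)) ((1:Fin 3),(1:Fin 3))).re ≤ mm 1 := by
    have h := hsumre 1 1
    rw [Fin.sum_univ_three] at h
    have h1 := hdiagσ 1 0 ((0:Fin 3),(1:Fin 3)); have h2 := hdiagσ 1 1 ((0:Fin 3),(1:Fin 3))
    have h3 := hdiagσ 1 0 ((1:Fin 3),(1:Fin 3))
    have h4 := hdiagσ 1 0 ((2:Fin 3),(1:Fin 3)); have h5 := hdiagσ 1 1 ((2:Fin 3),(1:Fin 3))
    linarith
  have hs10 : (σ 1 0 ((0:Fin 3),(0:Fin 3)) ((0:Fin 3),(0:Fin 3))).re ≤ mm 0 := by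
    have h := hsumre 1 0
    rw [Fin.sum_univ_three] at h
    have h1 := hdiagσ 1 1 ((0:Fin 3),(0:Fin 3))
    have h2 := hdiagσ 1 0 ((1:Fin 3),(0:Fin 3)); have h3 := hdiagσ 1 1 ((1:Fin 3),(0:Fin 3))
    have h4 := hdiagσ 1 0 ((2:Fin 3),(0:Fin 3)); have h5 := hdiagσ 1 1 ((2:Fin 3),(0:Fin 3))
    linarith
  have hs01 : (σ 0 1 ((1:Fin 3),(1:Fin 3)) ((1:Fin 3),(1:Fin 3))).re ≤ mm 1 := by
    have h := hsumre 0 1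
    rw [Fin.sum_univ_three] at h
    have h1 := hdiagσ 0 0 ((0:Fin 3),(1:Fin 3)); have h2 := hdiagσ 0 1 ((0:Fin 3),(1:Fin 3))
    have h3 := hdiagσ 0 0 ((1:Fin 3),(1:Fin 3))
    have h4 := hdiagσ 0 0 ((2:Fin 3),(1:Fin 3)); have h5 := hdiagσ 0 1 ((2:Fin 3),(1:Fin 3))
    linarith
  have ht0 : (σ 0 0 ((2:Fin 3),(2:Fin 3)) ((2:Fin 3),(2:Fin 3))).re
      + (σ 0 1 ((2:Fin 3),(2:Fin 3)) ((2:Fin 3),(2:Fin 3))).re ≤ mm 2 := by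
    have h := hsumre 0 2
    rw [Fin.sum_univ_three] at h
    have h1 := hdiagσ 0 0 ((0:Fin 3),(2:Fin 3)); have h2 := hdiagσ 0 1 ((0:Fin 3),(2:Fin 3))
    have h3 := hdiagσ 0 0 ((1:Fin 3),(2:Fin 3)); have h4 := hdiagσ 0 1 ((1:Fin 3),(2:Fin 3))
    linarith
  have ht1 : (σ 1 0 ((2:Fin 3),(2:Fin 3)) ((2:Fin 3),(2:Fin 3))).re
      + (σ 1 1 ((2:Fin 3),(2:Fin 3)) ((2:Fin 3),(2:Fin 3))).re ≤ mm 2 := by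
    have h := hsumre 1 2
    rw [Fin.sum_univ_three] at h
    have h1 := hdiagσ 1 0 ((0:Fin 3),(2:Fin 3)); have h2 := hdiagσ 1 1 ((0:Fin 3),(2:Fin 3))
    have h3 := hdiagσ 1 0 ((1:Fin 3),(2:Fin 3)); have h4 := hdiagσ 1 1 ((1:Fin 3),(2:Fin 3))
    linarith
  -- sqrt scalars
  set s00 := (σ 0 0 ((0:Fin 3),(0:Fin 3)) ((0:Fin 3),(0:Fin 3))).re with hs00_def
  set s11 := (σ 1 1 ((1:Fin 3),(1:Fin 3)) ((1:Fin 3),(1:Fin 3))).re with hs11_def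
  set s10 := (σ 1 0 ((0:Fin 3),(0:Fin 3)) ((0:Fin 3),(0:Fin 3))).re with hs10_def
  set s01 := (σ 0 1 ((1:Fin 3),(1:Fin 3)) ((1:Fin 3),(1:Fin 3))).re with hs01_def
  set t00 := (σ 0 0 ((2:Fin 3),(2:Fin 3)) ((2:Fin 3),(2:Fin 3))).re with ht00_def
  set t01 := (σ 0 1 ((2:Fin 3),(2:Fin 3)) ((2:Fin 3),(2:Fin 3))).re with ht01_def
  set t10 := (σ 1 0 ((2:Fin 3),(2:Fin 3)) ((2:Fin 3),(2:Fin 3))).re with ht10_def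
  set t11 := (σ 1 1 ((2:Fin 3),(2:Fin 3)) ((2:Fin 3),(2:Fin 3))).re with ht11_def
  have hij0 : ((0:Fin 3),(0:Fin 3)) ≠ ((2:Fin 3),(2:Fin 3)) := by decide
  have hij1 : ((1:Fin 3),(1:Fin 3)) ≠ ((2:Fin 3),(2:Fin 3)) := by decide
  -- p bounds
  have hp00 := pterm_bound (hσ 0 0) _ _ hij0 x y (Real.sqrt s00) (Real.sqrt t00)
    hx0 hy0 (Real.sqrt_nonneg _) (Real.sqrt_nonneg _)
    (Real.sq_sqrt (hdiagσ 0 0 _)) (Real.sq_sqrt (hdiagσ 0 0 _))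
  have hp10 := pterm_bound (hσ 1 0) _ _ hij0 x y (Real.sqrt s10) (Real.sqrt t10)
    hx0 hy0 (Real.sqrt_nonneg _) (Real.sqrt_nonneg _)
    (Real.sq_sqrt (hdiagσ 1 0 _)) (Real.sq_sqrt (hdiagσ 1 0 _))
  have hp01 := pterm_bound (hσ 0 1) _ _ hij1 x y (Real.sqrt s01) (Real.sqrt t01)
    hx0 hy0 (Real.sqrt_nonneg _) (Real.sqrt_nonneg _)
    (Real.sq_sqrt (hdiagσ 0 1 _)) (Real.sq_sqrt (hdiagσ 0 1 _))
  have hp11 := pterm_bound (hσ 1 1) _ _ hij1 x y (Real.sqrt s11) (Real.sqrt t11)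
    hx0 hy0 (Real.sqrt_nonneg _) (Real.sqrt_nonneg _)
    (Real.sq_sqrt (hdiagσ 1 1 _)) (Real.sq_sqrt (hdiagσ 1 1 _))
  -- replace S by g
  have hg0 : Real.sqrt s00 ≤ Real.sqrt (mm 0) := Real.sqrt_le_sqrt hs00
  have hg1 : Real.sqrt s10 ≤ Real.sqrt (mm 0) := Real.sqrt_le_sqrt hs10
  have hg2 : Real.sqrt s01 ≤ Real.sqrt (mm 1) := Real.sqrt_le_sqrt hs01
  have hg3 : Real.sqrt s11 ≤ Real.sqrt (mm 1) := Real.sqrt_le_sqrt hs11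
  set g0 := Real.sqrt (mm 0) with hg0_def
  set g1 := Real.sqrt (mm 1) with hg1_def
  set T00 := Real.sqrt t00
  set T01 := Real.sqrt t01
  set T10 := Real.sqrt t10
  set T11 := Real.sqrt t11
  have hq00 : (x*Real.sqrt s00 + y*T00)^2 ≤ (x*g0 + y*T00)^2 :=
    sq_step x y _ _ _ hx0 hy0 (Real.sqrt_nonneg _) (Real.sqrt_nonneg _) (Real.sqrt_nonneg _) hg0
  have hq10 : (x*Real.sqrt s10 + y*T10)^2 ≤ (x*g0 + y*T10)^2 :=
    sq_step x y _ _ _ hx0 hy0 (Real.sqrt_nonneg _) (Real.sqrt_nonneg _) (Real.sqrt_nonneg _) hg1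
  have hq01 : (x*Real.sqrt s01 + y*T01)^2 ≤ (x*g1 + y*T01)^2 :=
    sq_step x y _ _ _ hx0 hy0 (Real.sqrt_nonneg _) (Real.sqrt_nonneg _) (Real.sqrt_nonneg _) hg2
  have hq11 : (x*Real.sqrt s11 + y*T11)^2 ≤ (x*g1 + y*T11)^2 :=
    sq_step x y _ _ _ hx0 hy0 (Real.sqrt_nonneg _) (Real.sqrt_nonneg _) (Real.sqrt_nonneg _) hg3
  -- Cauchy aggregation
  set hh := Real.sqrt (mm 0 + mm 1) with hh_def
  set TA := Real.sqrt (t00 + t11) with hTA_def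
  set TC := Real.sqrt (t01 + t10) with hTC_def
  have hhh2 : hh^2 = g0^2 + g1^2 := by
    rw [hh_def, hg0_def, hg1_def, Real.sq_sqrt (by linarith [hmmnn 0, hmmnn 1]),
      Real.sq_sqrt (hmmnn 0), Real.sq_sqrt (hmmnn 1)]
  have ht00nn : 0 ≤ t00 := hdiagσ 0 0 _
  have ht01nn : 0 ≤ t01 := hdiagσ 0 1 _
  have ht10nn : 0 ≤ t10 := hdiagσ 1 0 _
  have ht11nn : 0 ≤ t11 := hdiagσ 1 1 _
  have hTA2 : TA^2 = T00^2 + T11^2 := by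
    rw [hTA_def, Real.sq_sqrt (by linarith), Real.sq_sqrt ht00nn, Real.sq_sqrt ht11nn]
  have hTC2 : TC^2 = T01^2 + T10^2 := by
    rw [hTC_def, Real.sq_sqrt (by linarith), Real.sq_sqrt ht01nn, Real.sq_sqrt ht10nn]
  have hcA : (x*g0 + y*T00)^2 + (x*g1 + y*T11)^2 ≤ (x*hh + y*TA)^2 :=
    cauchy_sq x y g0 g1 T00 T11 hh TA hx0 hy0 (Real.sqrt_nonneg _) (Real.sqrt_nonneg _)
      (Real.sqrt_nonneg _) (Real.sqrt_nonneg _) (Real.sqrt_nonneg _) (Real.sqrt_nonneg _)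
      hhh2 hTA2
  have hcC : (x*g1 + y*T01)^2 + (x*g0 + y*T10)^2 ≤ (x*hh + y*TC)^2 :=
    cauchy_sq x y g1 g0 T01 T10 hh TC hx0 hy0 (Real.sqrt_nonneg _) (Real.sqrt_nonneg _)
      (Real.sqrt_nonneg _) (Real.sqrt_nonneg _) (Real.sqrt_nonneg _) (Real.sqrt_nonneg _)
      (by rw [hhh2]; ring) hTC2
  -- core inequality
  have hhh2' : hh^2 = mm 0 + mm 1 := Real.sq_sqrt (by linarith [hmmnn 0, hmmnn 1])
  have hcore : (w^2+1)*((x*hh) + (y*TA))^2 + w^2*((x*hh) + (y*TC))^2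
      ≤ 2*w^2 + 1 + 1/(4*w) := by
    apply coreUACm w (x*hh) (y*TA) (y*TC) (mm 2) hw2
      (by positivity) (by positivity) (by positivity) (hmmnn 2)
    · have : (x*hh)^2 = δ * (mm 0 + mm 1) := by
        rw [mul_pow, hx2, hhh2']
      rw [this]
      have : w * (δ * (mm 0 + mm 1)) = 2 * (mm 0 + mm 1) := by
        rw [← mul_assoc, hwδ]
      rw [this]
      linarith
    · have hTA2' : TA^2 = t00 + t11 := Real.sq_sqrt (by linarith)
      have hTC2' : TC^2 = t01 + t10 := Real.sq_sqrt (by linarith)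
      have : (y*TA)^2 + (y*TC)^2 = (1-δ) * (t00+t11+t01+t10) := by
        rw [mul_pow, mul_pow, hy2, hTA2', hTC2']; ring
      rw [this]
      have hwy : w * (1-δ) = w - 2 := by
        rw [mul_sub, hwδ, mul_one]
      calc w * ((1-δ) * (t00+t11+t01+t10)) = (w-2) * (t00+t11+t01+t10) := by
            rw [← mul_assoc, hwy]
        _ ≤ 2*(w-2)*(mm 2) := by
            have hwm2 : (0:ℝ) ≤ w - 2 := by linarith
            have := mul_le_mul_of_nonneg_left (add_le_add ht0 ht1) hwm2
            linarith only [this]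
  -- expand the objective
  rw [Fin.sum_univ_two, Fin.sum_univ_two, Fin.sum_univ_two]
  rw [psi0_eq, psi1_eq]
  rw [← hx_def, ← hy_def]
  simp only [show ((0:Fin 2) = 0) = True from by simp, show ((0:Fin 2) = 1) = False from by decide,
    show ((1:Fin 2) = 0) = False from by decide, show ((1:Fin 2) = 1) = True from by simp,
    if_true, if_false]
  have hv_eq : v = w^2 := hwsq.symm
  have hgoal_rhs : (1:ℝ)/2 + 1/(8*w) = (1/2)*(2*w^2+1+1/(4*w)) - w^2 := by
    field_simp
    ring
  rw [hgoal_rhs, hv_eq]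
  have h00 : (star (Pi.single ((0:Fin 3),(0:Fin 3)) (x:ℂ) + Pi.single ((2:Fin 3),(2:Fin 3)) (y:ℂ)) ⬝ᵥ
      (σ 0 0) *ᵥ (Pi.single ((0:Fin 3),(0:Fin 3)) (x:ℂ) + Pi.single ((2:Fin 3),(2:Fin 3)) (y:ℂ))).re
      ≤ (x*g0 + y*T00)^2 := by
    calc _ ≤ (x*Real.sqrt s00 + y*T00)^2 := hp00
      _ ≤ (x*g0 + y*T00)^2 := hq00
  have h11 : (star (Pi.single ((1:Fin 3),(1:Fin 3)) (x:ℂ) + Pi.single ((2:Fin 3),(2:Fin 3)) (y:ℂ)) ⬝ᵥ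
      (σ 1 1) *ᵥ (Pi.single ((1:Fin 3),(1:Fin 3)) (x:ℂ) + Pi.single ((2:Fin 3),(2:Fin 3)) (y:ℂ))).re
      ≤ (x*g1 + y*T11)^2 := by
    calc _ ≤ (x*Real.sqrt s11 + y*T11)^2 := hp11
      _ ≤ (x*g1 + y*T11)^2 := hq11
  have h10 : (star (Pi.single ((0:Fin 3),(0:Fin 3)) (x:ℂ) + Pi.single ((2:Fin 3),(2:Fin 3)) (y:ℂ)) ⬝ᵥ
      (σ 1 0) *ᵥ (Pi.single ((0:Fin 3),(0:Fin 3)) (x:ℂ) + Pi.single ((2:Fin 3),(2:Fin 3)) (y:ℂ))).re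
      ≤ (x*g0 + y*T10)^2 := by
    calc _ ≤ (x*Real.sqrt s10 + y*T10)^2 := hp10
      _ ≤ (x*g0 + y*T10)^2 := hq10
  have h01 : (star (Pi.single ((1:Fin 3),(1:Fin 3)) (x:ℂ) + Pi.single ((2:Fin 3),(2:Fin 3)) (y:ℂ)) ⬝ᵥ
      (σ 0 1) *ᵥ (Pi.single ((1:Fin 3),(1:Fin 3)) (x:ℂ) + Pi.single ((2:Fin 3),(2:Fin 3)) (y:ℂ))).re
      ≤ (x*g1 + y*T01)^2 := by
    calc _ ≤ (x*Real.sqrt s01 + y*T01)^2 := hp01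
      _ ≤ (x*g1 + y*T01)^2 := hq01
  have hw2p : (0:ℝ) ≤ w^2 := sq_nonneg w
  have hw2p1 : (0:ℝ) ≤ w^2 + 1 := by linarith
  linarith only [mul_le_mul_of_nonneg_left h00 hw2p1, mul_le_mul_of_nonneg_left h11 hw2p1,
    mul_le_mul_of_nonneg_left h10 hw2p, mul_le_mul_of_nonneg_left h01 hw2p,
    mul_le_mul_of_nonneg_left hcA hw2p1, mul_le_mul_of_nonneg_left hcC hw2p, hcore]
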